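/- arXiv:2209.09162 — 2 statements merged into one kernel-verified Lean document; each statement's English description precedes it below -/
import Mathlib

section
/- Let H ∈ (0,1), β ∈ ℝ, σ > 0, and 0 ≤ s ≤ t ≤ 1. Then V_{H,β,σ}(s,t) ≤ e^{3|β|} · σ² · (t−s)^{2H}. -/
open MeasureTheory Real

lemma fouVar_aux (H β c : ℝ) (hH1 : 0 < H) (hH2 : H < 1) (a : ℝ) (ha : 0 ≤ a)
    (ha1 : a ≤ 1) (hc : |c| ≤ |β|) :
    ∫ z in (0:ℝ)..a, z ^ (2 * H - 1) * Real.exp (c * z) ≤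
      Real.exp |β| * (a ^ (2 * H) / (2 * H)) := by
  have hr : (-1 : ℝ) < 2 * H - 1 := by linarith
  have hint1 : IntervalIntegrable (fun z : ℝ => z ^ (2 * H - 1)) volume 0 a :=
    intervalIntegral.intervalIntegrable_rpow' hr
  have hint2 : IntervalIntegrable
      (fun z : ℝ => z ^ (2 * H - 1) * Real.exp (c * z)) volume 0 a :=
    hint1.mul_continuousOn ((Real.continuous_exp.comp (continuous_const.mul
      continuous_id)).continuousOn)
  have hmono : ∫ z in (0:ℝ)..a, z ^ (2 * H - 1) * Real.exp (c * z) ≤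
      ∫ z in (0:ℝ)..a, Real.exp |β| * z ^ (2 * H - 1) := by
    apply intervalIntegral.integral_mono_on ha hint2 (hint1.const_mul _)
    intro z hz
    have hz0 : 0 ≤ z := hz.1
    have hz1 : z ≤ 1 := le_trans hz.2 ha1
    have hexp : Real.exp (c * z) ≤ Real.exp |β| := by
      apply Real.exp_le_exp.2
      calc c * z ≤ |c * z| := le_abs_self _
        _ = |c| * z := by rw [abs_mul, abs_of_nonneg hz0]
        _ ≤ |β| * 1 := by
            apply mul_le_mul hc hz1 hz0 (abs_nonneg _)
        _ = |β| := mul_one _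
    calc z ^ (2 * H - 1) * Real.exp (c * z) ≤ z ^ (2 * H - 1) * Real.exp |β| :=
          mul_le_mul_of_nonneg_left hexp (Real.rpow_nonneg hz0 _)
      _ = Real.exp |β| * z ^ (2 * H - 1) := mul_comm _ _
  have hval : ∫ z in (0:ℝ)..a, Real.exp |β| * z ^ (2 * H - 1) =
      Real.exp |β| * (a ^ (2 * H) / (2 * H)) := by
    rw [intervalIntegral.integral_const_mul, integral_rpow (Or.inl hr)]
    have h0 : (0:ℝ) ^ (2 * H - 1 + 1) = 0 := by
      rw [Real.zero_rpow (ne_of_gt (by linarith))]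
    rw [h0]
    ring_nf
  linarith [hmono, hval.ge, hmono.trans hval.le]

/-- The increment variance of the fractional Ornstein–Uhlenbeck process:
`V_{H,β,σ}(s,t) = σ² H e^(-2βt) ∫₀^(t-s) z^(2H-1) e^(βz) dz
                + σ² H e^(-2βs) ∫₀^(t-s) z^(2H-1) e^(-βz) dz`. -/
noncomputable def fouVar (H β σ s t : ℝ) : ℝ :=
  σ ^ 2 * H * Real.exp (-(2 * β * t)) *
      (∫ z in (0:ℝ)..(t - s), z ^ (2 * H - 1) * Real.exp (β * z)) +
    σ ^ 2 * H * Real.exp (-(2 * β * s)) *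
      (∫ z in (0:ℝ)..(t - s), z ^ (2 * H - 1) * Real.exp (-(β * z)))

/-- For `H ∈ (0,1)`, `β ∈ ℝ`, `σ > 0` and `0 ≤ s ≤ t ≤ 1`,
`V_{H,β,σ}(s,t) ≤ e^(3|β|) σ² (t-s)^(2H)`. -/
theorem fouVar_upper (H β σ s t : ℝ) (hH : H ∈ Set.Ioo (0:ℝ) 1) (hσ : 0 < σ)
    (hs : 0 ≤ s) (hst : s ≤ t) (ht : t ≤ 1) :
    fouVar H β σ s t ≤ Real.exp (3 * |β|) * σ ^ 2 * (t - s) ^ (2 * H) := by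
  obtain ⟨hH1, hH2⟩ := hH
  set a := t - s with ha_def
  have ha : 0 ≤ a := by simp [ha_def]; linarith
  have ha1 : a ≤ 1 := by simp [ha_def]; linarith
  have hI1 : ∫ z in (0:ℝ)..a, z ^ (2 * H - 1) * Real.exp (β * z) ≤
      Real.exp |β| * (a ^ (2 * H) / (2 * H)) :=
    fouVar_aux H β β hH1 hH2 a ha ha1 le_rfl
  have hI2 : ∫ z in (0:ℝ)..a, z ^ (2 * H - 1) * Real.exp (-(β * z)) ≤
      Real.exp |β| * (a ^ (2 * H) / (2 * H)) := by
    have := fouVar_aux H β (-β) hH1 hH2 a ha ha1 (by rw [abs_neg])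
    simpa [neg_mul] using this
  have hI1nn : 0 ≤ ∫ z in (0:ℝ)..a, z ^ (2 * H - 1) * Real.exp (β * z) := by
    apply intervalIntegral.integral_nonneg ha
    intro u hu
    have := hu.1
    positivity
  have hI2nn : 0 ≤ ∫ z in (0:ℝ)..a, z ^ (2 * H - 1) * Real.exp (-(β * z)) := by
    apply intervalIntegral.integral_nonneg ha
    intro u hu
    have := hu.1
    positivity
  have he_t : Real.exp (-(2 * β * t)) ≤ Real.exp (2 * |β|) := by
    apply Real.exp_le_exp.2
    have ht0 : 0 ≤ t := le_trans hs hst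
    calc -(2 * β * t) ≤ |2 * β * t| := neg_le_abs _
      _ = 2 * |β| * t := by rw [abs_mul, abs_mul, abs_of_nonneg ht0]; norm_num
      _ ≤ 2 * |β| * 1 := by
          apply mul_le_mul_of_nonneg_left ht; positivity
      _ = 2 * |β| := mul_one _
  have he_s : Real.exp (-(2 * β * s)) ≤ Real.exp (2 * |β|) := by
    apply Real.exp_le_exp.2
    calc -(2 * β * s) ≤ |2 * β * s| := neg_le_abs _
      _ = 2 * |β| * s := by rw [abs_mul, abs_mul, abs_of_nonneg hs]; norm_num
      _ ≤ 2 * |β| * 1 := by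
          apply mul_le_mul_of_nonneg_left (le_trans hst ht); positivity
      _ = 2 * |β| := mul_one _
  have hc : (0:ℝ) < σ ^ 2 * H := by positivity
  have hterm1 : σ ^ 2 * H * Real.exp (-(2 * β * t)) *
      (∫ z in (0:ℝ)..a, z ^ (2 * H - 1) * Real.exp (β * z)) ≤
      σ ^ 2 * H * Real.exp (2 * |β|) * (Real.exp |β| * (a ^ (2 * H) / (2 * H))) := by
    apply mul_le_mul _ hI1 hI1nn (by positivity)
    exact mul_le_mul_of_nonneg_left he_t hc.le
  have hterm2 : σ ^ 2 * H * Real.exp (-(2 * β * s)) *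
      (∫ z in (0:ℝ)..a, z ^ (2 * H - 1) * Real.exp (-(β * z))) ≤
      σ ^ 2 * H * Real.exp (2 * |β|) * (Real.exp |β| * (a ^ (2 * H) / (2 * H))) := by
    apply mul_le_mul _ hI2 hI2nn (by positivity)
    exact mul_le_mul_of_nonneg_left he_s hc.le
  have hsum : fouVar H β σ s t ≤
      2 * (σ ^ 2 * H * Real.exp (2 * |β|) * (Real.exp |β| * (a ^ (2 * H) / (2 * H)))) := by
    unfold fouVar
    rw [← ha_def]
    linarith
  have hfinal : 2 * (σ ^ 2 * H * Real.exp (2 * |β|) *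
      (Real.exp |β| * (a ^ (2 * H) / (2 * H)))) =
      Real.exp (3 * |β|) * σ ^ 2 * a ^ (2 * H) := by
    rw [show (3:ℝ) * |β| = 2 * |β| + |β| by ring, Real.exp_add]
    field_simp
  linarith [hsum, hfinal.le, hsum.trans hfinal.le]
end

section
/- Let H ∈ (0,1), β ∈ ℝ with |β| ≤ 1, σ > 0, and 0 ≤ s ≤ t ≤ 1. Then V_{H,β,σ}(s,t) ≥ σ² · e^{−2|β|} · (t−s)^{2H}. -/
open MeasureTheory Real

lemma aux_integral_ge (H u c : ℝ) (hH : H ∈ Set.Ioo (0:ℝ) 1) (hu : 0 ≤ u)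
    (g : ℝ → ℝ) (hg : Continuous g) (hgl : ∀ z ∈ Set.Icc (0:ℝ) u, c ≤ g z) :
    c * u ^ (2 * H) / (2 * H) ≤ ∫ z in (0:ℝ)..u, z ^ (2 * H - 1) * g z := by
  have h2H : 0 < 2 * H := by nlinarith [hH.1]
  have hr : (-1 : ℝ) < 2 * H - 1 := by linarith
  have hrpow : IntervalIntegrable (fun z : ℝ => z ^ (2 * H - 1)) volume 0 u :=
    intervalIntegral.intervalIntegrable_rpow' hr
  have hint : IntervalIntegrable (fun z : ℝ => z ^ (2 * H - 1) * g z) volume 0 u :=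
    hrpow.mul_continuousOn hg.continuousOn
  have hmono : (∫ z in (0:ℝ)..u, c * z ^ (2 * H - 1)) ≤
      ∫ z in (0:ℝ)..u, z ^ (2 * H - 1) * g z := by
    apply intervalIntegral.integral_mono_on hu (hrpow.const_mul c) hint
    intro z hz
    have hzp : 0 ≤ z ^ (2 * H - 1) := Real.rpow_nonneg hz.1 _
    have hc := hgl z hz
    calc c * z ^ (2 * H - 1) = z ^ (2 * H - 1) * c := by ring
    _ ≤ z ^ (2 * H - 1) * g z := mul_le_mul_of_nonneg_left hc hzp
  have hval : (∫ z in (0:ℝ)..u, c * z ^ (2 * H - 1)) = c * u ^ (2 * H) / (2 * H) := by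
    rw [intervalIntegral.integral_const_mul, integral_rpow (Or.inl hr)]
    rw [Real.zero_rpow (by linarith : 2 * H - 1 + 1 ≠ 0)]
    ring_nf
  linarith [hmono, hval.symm.le, hval.le]

/-- For `H ∈ (0,1)`, `|β| ≤ 1`, `σ > 0` and `0 ≤ s ≤ t ≤ 1`,
`V_{H,β,σ}(s,t) ≥ σ² e^(-2|β|) (t-s)^(2H)`. -/
theorem fouVar_lower (H β σ s t : ℝ) (hH : H ∈ Set.Ioo (0:ℝ) 1) (hβ : |β| ≤ 1)
    (hσ : 0 < σ) (hs : 0 ≤ s) (hst : s ≤ t) (ht : t ≤ 1) :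
    σ ^ 2 * Real.exp (-(2 * |β|)) * (t - s) ^ (2 * H) ≤ fouVar H β σ s t := by
  obtain ⟨hH0, hH1⟩ := hH
  have hu : 0 ≤ t - s := sub_nonneg.mpr hst
  have ht0 : 0 ≤ t := hs.trans hst
  have h2H : 0 < 2 * H := by linarith
  have hβ0 : 0 ≤ |β| := abs_nonneg β
  have habs : β ≥ -|β| ∧ β ≤ |β| := ⟨neg_abs_le β, le_abs_self β⟩
  -- first integral
  have key1 : Real.exp (-(2 * |β|)) * (t - s) ^ (2 * H) / (2 * H) ≤
      ∫ z in (0:ℝ)..(t - s), z ^ (2 * H - 1) *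
        (Real.exp (-(2 * β * t)) * Real.exp (β * z)) := by
    apply aux_integral_ge H (t - s) _ ⟨hH0, hH1⟩ hu
    · exact continuous_const.mul (Real.continuous_exp.comp (by continuity))
    · intro z hz
      rw [← Real.exp_add]
      apply Real.exp_le_exp.mpr
      have h1 : |β * (z - 2 * t)| ≤ 2 * |β| := by
        rw [abs_mul]
        have h2 : |z - 2 * t| ≤ 2 := by
          rw [abs_le]
          constructor <;> nlinarith [hz.1, hz.2]
        nlinarith
      have h3 := neg_abs_le (β * (z - 2 * t))
      nlinarith [h1, h3]
  have key2 : Real.exp (-(2 * |β|)) * (t - s) ^ (2 * H) / (2 * H) ≤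
      ∫ z in (0:ℝ)..(t - s), z ^ (2 * H - 1) *
        (Real.exp (-(2 * β * s)) * Real.exp (-(β * z))) := by
    apply aux_integral_ge H (t - s) _ ⟨hH0, hH1⟩ hu
    · exact continuous_const.mul (Real.continuous_exp.comp (by continuity))
    · intro z hz
      rw [← Real.exp_add]
      apply Real.exp_le_exp.mpr
      have h1 : |β * (z + 2 * s)| ≤ 2 * |β| := by
        rw [abs_mul]
        have h2 : |z + 2 * s| ≤ 2 := by
          rw [abs_le]
          constructor <;> nlinarith [hz.1, hz.2]
        nlinarith
      have h3 := le_abs_self (β * (z + 2 * s))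
      nlinarith [h1, h3]
  -- rewrite fouVar
  have e1 : σ ^ 2 * H * Real.exp (-(2 * β * t)) *
      (∫ z in (0:ℝ)..(t - s), z ^ (2 * H - 1) * Real.exp (β * z)) =
      σ ^ 2 * H * ∫ z in (0:ℝ)..(t - s), z ^ (2 * H - 1) *
        (Real.exp (-(2 * β * t)) * Real.exp (β * z)) := by
    rw [mul_assoc, ← intervalIntegral.integral_const_mul]
    congr 1
    apply intervalIntegral.integral_congr
    intro z _
    ring
  have e2 : σ ^ 2 * H * Real.exp (-(2 * β * s)) *
      (∫ z in (0:ℝ)..(t - s), z ^ (2 * H - 1) * Real.exp (-(β * z))) =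
      σ ^ 2 * H * ∫ z in (0:ℝ)..(t - s), z ^ (2 * H - 1) *
        (Real.exp (-(2 * β * s)) * Real.exp (-(β * z))) := by
    rw [mul_assoc, ← intervalIntegral.integral_const_mul]
    congr 1
    apply intervalIntegral.integral_congr
    intro z _
    ring
  have hσH : 0 < σ ^ 2 * H := by positivity
  have hfin : σ ^ 2 * H * (Real.exp (-(2 * |β|)) * (t - s) ^ (2 * H) / (2 * H)) +
      σ ^ 2 * H * (Real.exp (-(2 * |β|)) * (t - s) ^ (2 * H) / (2 * H)) =
      σ ^ 2 * Real.exp (-(2 * |β|)) * (t - s) ^ (2 * H) := by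
    field_simp
    ring
  unfold fouVar
  rw [e1, e2, ← hfin]
  exact add_le_add (mul_le_mul_of_nonneg_left key1 hσH.le) (mul_le_mul_of_nonneg_left key2 hσH.le)
end
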